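/- Hankel-basis inner product bound (used in the proof of Lemma 8). Let n_s ≥ 1, n = 2n_s − 1, and let H_a ∈ ℂ^{n_s×n_s} be the Hankel basis matrix for a ∈ {0,…,n−1}. Then for all r ≥ 1, all A, B ∈ ℂ^{n_s×r}, and all a ∈ {0,…,n−1}: |⟨A·Bᵀ, H_a⟩| ≤ min( ‖A‖_F·‖B‖_{2,∞}, ‖A‖_{2,∞}·‖B‖_F ). -/

import Mathlib

open Matrix
open scoped BigOperators

noncomputable section

/-- Frobenius norm of a complex matrix. -/
def frobNorm {m n : ℕ} (A : Matrix (Fin m) (Fin n) ℂ) : ℝ :=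
  Real.sqrt (∑ i, ∑ j, ‖A i j‖ ^ 2)

/-- Euclidean (ℓ₂) norm of a complex vector. -/
def vecNorm {n : ℕ} (v : Fin n → ℂ) : ℝ :=
  Real.sqrt (∑ i, ‖v i‖ ^ 2)

/-- `‖A‖_{2,∞}`: the largest ℓ₂ norm of the rows of `A`. -/
def norm2inf {m n : ℕ} (A : Matrix (Fin m) (Fin n) ℂ) : ℝ :=
  ⨆ i, vecNorm (A i)

/-- `w_a`: the length of the `a`-th skew diagonal of an `n_s × n_s` matrix. -/
def hw (ns : ℕ) (a : ℕ) : ℕ :=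
  (Finset.univ.filter (fun p : Fin ns × Fin ns => (p.1 : ℕ) + (p.2 : ℕ) = a)).card

/-- The Hankel basis matrix `H_a` with entries `1/√(w_a)` on the `a`-th skew
diagonal and `0` elsewhere. -/
def hankelBasis (ns : ℕ) (a : ℕ) : Matrix (Fin ns) (Fin ns) ℂ :=
  fun i j => if (i : ℕ) + (j : ℕ) = a then ((1 / Real.sqrt (hw ns a) : ℝ) : ℂ) else 0

lemma vecNorm_nonneg {n : ℕ} (v : Fin n → ℂ) : 0 ≤ vecNorm v :=
  Real.sqrt_nonneg _

lemma frobNorm_nonneg {m n : ℕ} (A : Matrix (Fin m) (Fin n) ℂ) : 0 ≤ frobNorm A :=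
  Real.sqrt_nonneg _

lemma norm2inf_nonneg {m n : ℕ} (A : Matrix (Fin m) (Fin n) ℂ) : 0 ≤ norm2inf A :=
  Real.iSup_nonneg (fun i => vecNorm_nonneg _)

lemma vecNorm_le_norm2inf {m n : ℕ} (A : Matrix (Fin m) (Fin n) ℂ) (i : Fin m) :
    vecNorm (A i) ≤ norm2inf A := by
  rw [norm2inf]
  exact le_ciSup (Set.Finite.bddAbove (Set.finite_range fun i => vecNorm (A i))) i

lemma trace_formula {ns : ℕ} (M H : Matrix (Fin ns) (Fin ns) ℂ) :
    Matrix.trace (Mᴴ * H) = ∑ i, ∑ j, (starRingEnd ℂ) (M i j) * H i j := by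
  rw [Matrix.trace]
  simp only [Matrix.diag, Matrix.mul_apply, Matrix.conjTranspose_apply]
  rw [Finset.sum_comm]
  rfl

/-- Cauchy–Schwarz entrywise bound. -/
lemma entry_bound {ns r : ℕ} (A B : Matrix (Fin ns) (Fin r) ℂ) (i j : Fin ns) :
    ‖(A * Bᵀ) i j‖ ≤ vecNorm (A i) * vecNorm (B j) := by
  have h : (A * Bᵀ) i j = ∑ k, A i k * B j k := by
    simp [Matrix.mul_apply, Matrix.transpose_apply]
  rw [h]
  calc ‖∑ k, A i k * B j k‖ ≤ ∑ k, ‖A i k * B j k‖ :=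
        norm_sum_le _ _
    _ = ∑ k, ‖A i k‖ * ‖B j k‖ := by
        simp [norm_mul]
    _ ≤ Real.sqrt (∑ k, ‖A i k‖ ^ 2) * Real.sqrt (∑ k, ‖B j k‖ ^ 2) :=
        Real.sum_mul_le_sqrt_mul_sqrt _ _ _
    _ = vecNorm (A i) * vecNorm (B j) := rfl

/-- Key one-sided bound. -/
lemma key_bound {ns r : ℕ} (hns : 1 ≤ ns) (A B : Matrix (Fin ns) (Fin r) ℂ)
    (a : ℕ) (ha : a ≤ 2 * ns - 2) :
    ‖Matrix.trace ((A * Bᵀ)ᴴ * hankelBasis ns a)‖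
      ≤ frobNorm A * norm2inf B := by
  set S := Finset.univ.filter (fun p : Fin ns × Fin ns => (p.1 : ℕ) + (p.2 : ℕ) = a) with hS
  set c : ℝ := 1 / Real.sqrt (hw ns a) with hc
  -- S is nonempty
  have hmem : (⟨min a (ns - 1), by omega⟩, (⟨a - min a (ns - 1), by omega⟩ : Fin ns)) ∈ S := by
    simp only [hS, Finset.mem_filter, Finset.mem_univ, true_and]
    omega
  have hw_pos : 0 < hw ns a := Finset.card_pos.mpr ⟨_, hmem⟩
  have hsq_pos : 0 < Real.sqrt (hw ns a) := Real.sqrt_pos.mpr (by positivity)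
  have hc_nonneg : 0 ≤ c := by positivity
  -- trace formula over the diagonal
  have h1 : Matrix.trace ((A * Bᵀ)ᴴ * hankelBasis ns a)
      = ∑ p ∈ S, (starRingEnd ℂ) ((A * Bᵀ) p.1 p.2) * (c : ℂ) := by
    rw [trace_formula]
    rw [← Finset.sum_product']
    rw [hS, Finset.sum_filter]
    apply Finset.sum_congr rfl
    intro p _
    by_cases h : (p.1 : ℕ) + (p.2 : ℕ) = a <;> simp [hankelBasis, h, hc]
  rw [h1]
  have h2 : ‖∑ p ∈ S, (starRingEnd ℂ) ((A * Bᵀ) p.1 p.2) * (c : ℂ)‖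
      ≤ ∑ p ∈ S, vecNorm (A p.1) * norm2inf B * c := by
    refine (norm_sum_le _ _).trans (Finset.sum_le_sum fun p _ => ?_)
    rw [norm_mul, Complex.norm_conj, Complex.norm_real, Real.norm_of_nonneg hc_nonneg]
    have := entry_bound A B p.1 p.2
    have hB := vecNorm_le_norm2inf B p.2
    have hA0 := vecNorm_nonneg (A p.1)
    have hB0 := vecNorm_nonneg (B p.2)
    apply mul_le_mul_of_nonneg_right _ hc_nonneg
    exact this.trans (mul_le_mul_of_nonneg_left hB hA0)
  refine h2.trans ?_
  -- sum over distinct first coordinates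
  have hinj : Set.InjOn Prod.fst (S : Set (Fin ns × Fin ns)) := by
    intro p hp q hq hpq
    simp only [hS, Finset.coe_filter, Set.mem_setOf_eq] at hp hq
    have h1 : (p.1 : ℕ) = (q.1 : ℕ) := by rw [hpq]
    have h2 : (p.2 : ℕ) = (q.2 : ℕ) := by omega
    exact Prod.ext hpq (Fin.ext h2)
  have hsum_eq : ∑ p ∈ S, vecNorm (A p.1) = ∑ i ∈ S.image Prod.fst, vecNorm (A i) := by
    exact (Finset.sum_image (s := S) (g := Prod.fst) (f := fun i => vecNorm (A i))
      (fun p hp q hq h => hinj (Finset.mem_coe.mpr hp) (Finset.mem_coe.mpr hq) h)).symm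
  have hwcard : hw ns a = S.card := by rw [hw, hS]
  have hcard : (S.image Prod.fst).card = hw ns a :=
    (Finset.card_image_of_injOn hinj).trans hwcard.symm
  have h3 : ∑ i ∈ S.image Prod.fst, vecNorm (A i)
      ≤ Real.sqrt (hw ns a) * frobNorm A := by
    have cs : ∑ i ∈ S.image Prod.fst, (1 : ℝ) * vecNorm (A i)
        ≤ Real.sqrt (∑ _i ∈ S.image Prod.fst, (1:ℝ) ^ 2)
          * Real.sqrt (∑ i ∈ S.image Prod.fst, vecNorm (A i) ^ 2) :=
      Real.sum_mul_le_sqrt_mul_sqrt _ _ _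
    simp only [one_mul, one_pow, Finset.sum_const, nsmul_eq_mul, mul_one] at cs
    refine cs.trans ?_
    rw [hcard]
    apply mul_le_mul_of_nonneg_left _ (Real.sqrt_nonneg _)
    apply Real.sqrt_le_sqrt
    have hsub : S.image Prod.fst ⊆ Finset.univ := Finset.subset_univ _
    refine (Finset.sum_le_sum_of_subset_of_nonneg hsub fun i _ _ => sq_nonneg _).trans ?_
    apply le_of_eq
    apply Finset.sum_congr rfl
    intro i _
    rw [vecNorm, Real.sq_sqrt (Finset.sum_nonneg fun k _ => sq_nonneg _)]
  calc ∑ p ∈ S, vecNorm (A p.1) * norm2inf B * c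
      = (∑ p ∈ S, vecNorm (A p.1)) * (norm2inf B * c) := by
        rw [Finset.sum_mul]; apply Finset.sum_congr rfl; intros; ring
    _ ≤ (Real.sqrt (hw ns a) * frobNorm A) * (norm2inf B * c) := by
        apply mul_le_mul_of_nonneg_right (by rw [hsum_eq]; exact h3)
        exact mul_nonneg (norm2inf_nonneg _) hc_nonneg
    _ = frobNorm A * norm2inf B * (Real.sqrt (hw ns a) * c) := by ring
    _ = frobNorm A * norm2inf B := by
        rw [hc, mul_one_div, div_self (ne_of_gt hsq_pos), mul_one]

/-- Symmetry of the trace pairing under swapping `A` and `B`. -/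
lemma trace_swap {ns r : ℕ} (A B : Matrix (Fin ns) (Fin r) ℂ) (a : ℕ) :
    Matrix.trace ((A * Bᵀ)ᴴ * hankelBasis ns a)
      = Matrix.trace ((B * Aᵀ)ᴴ * hankelBasis ns a) := by
  rw [trace_formula, trace_formula]
  rw [Finset.sum_comm]
  apply Finset.sum_congr rfl
  intro i _
  apply Finset.sum_congr rfl
  intro j _
  have h1 : (A * Bᵀ) j i = (B * Aᵀ) i j := by
    simp [Matrix.mul_apply, Matrix.transpose_apply, mul_comm]
  have h2 : hankelBasis ns a j i = hankelBasis ns a i j := by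
    simp [hankelBasis, Nat.add_comm]
  rw [h1, h2]

/-- Hankel-basis inner product bound:
`|⟨ABᵀ, H_a⟩| ≤ min(‖A‖_F·‖B‖_{2,∞}, ‖A‖_{2,∞}·‖B‖_F)`. -/
theorem hankel_basis_inner_bound (ns r : ℕ) (hns : 1 ≤ ns) (hr : 1 ≤ r)
    (A B : Matrix (Fin ns) (Fin r) ℂ) (a : Fin (2 * ns - 1)) :
    ‖Matrix.trace ((A * Bᵀ)ᴴ * hankelBasis ns (a : ℕ))‖
      ≤ min (frobNorm A * norm2inf B) (norm2inf A * frobNorm B) := by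
  have ha : (a : ℕ) ≤ 2 * ns - 2 := by have := a.isLt; omega
  refine le_min (key_bound hns A B a ha) ?_
  rw [trace_swap, mul_comm (norm2inf A) (frobNorm B)]
  exact key_bound hns B A a ha
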